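/- arXiv:0910.0986 — 7 statements merged into one kernel-verified Lean document; each statement's English description precedes it below -/
import Mathlib

section
/- The tensor rank of the three-qubit W state |W⟩ = |100⟩ + |010⟩ + |001⟩ is exactly 3; that is, |W⟩ can be written as a sum of 3 product vectors but not as a sum of 2 product vectors in ℂ²⊗ℂ²⊗ℂ². -/
open TensorProduct

/-- Tripartite tensor rank: minimal number of product vectors summing to `ψ`. -/
noncomputable def tRank {A B C : Type*} [AddCommGroup A] [Module ℂ A]
    [AddCommGroup B] [Module ℂ B] [AddCommGroup C] [Module ℂ C]
    (ψ : A ⊗[ℂ] (B ⊗[ℂ] C)) : ℕ :=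
  sInf {r | ∃ (a : Fin r → A) (b : Fin r → B) (c : Fin r → C),
    ψ = ∑ i, a i ⊗ₜ[ℂ] (b i ⊗ₜ[ℂ] c i)}

/-- ℂ², with basis indexed by `Bool`. -/
abbrev Q : Type := Bool → ℂ

noncomputable def q (b : Bool) : Q := Pi.single b 1

/-- The W state `|100⟩ + |010⟩ + |001⟩`. -/
noncomputable def Wstate : Q ⊗[ℂ] (Q ⊗[ℂ] Q) :=
  q true ⊗ₜ[ℂ] (q false ⊗ₜ[ℂ] q false) +
  q false ⊗ₜ[ℂ] (q true ⊗ₜ[ℂ] q false) +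
  q false ⊗ₜ[ℂ] (q false ⊗ₜ[ℂ] q true)

noncomputable def ev (x : Bool) : Q →ₗ[ℂ] ℂ := LinearMap.proj x

/-- The coefficient functional extracting the `(x, y, z)` coordinate. -/
noncomputable def F (x y z : Bool) : Q ⊗[ℂ] (Q ⊗[ℂ] Q) →ₗ[ℂ] ℂ :=
  TensorProduct.lift ((LinearMap.mul ℂ ℂ).compl₁₂ (ev x)
    (TensorProduct.lift ((LinearMap.mul ℂ ℂ).compl₁₂ (ev y) (ev z))))

@[simp] lemma F_tmul (x y z : Bool) (u v w : Q) :
    F x y z (u ⊗ₜ[ℂ] (v ⊗ₜ[ℂ] w)) = u x * (v y * w z) := by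
  simp [F, ev]

@[simp] lemma q_apply (b x : Bool) : q b x = if x = b then 1 else 0 := by
  simp [q, Pi.single_apply]

lemma exists_rank_three :
    ∃ (a b c : Fin 3 → Q), Wstate = ∑ i, a i ⊗ₜ[ℂ] (b i ⊗ₜ[ℂ] c i) := by
  refine ⟨![q true, q false, q false], ![q false, q true, q false],
    ![q false, q false, q true], ?_⟩
  simp [Wstate, Fin.sum_univ_three]

lemma no_rank_two :
    ¬ (∃ (a b c : Fin 2 → Q), Wstate = ∑ i, a i ⊗ₜ[ℂ] (b i ⊗ₜ[ℂ] c i)) := by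
  rintro ⟨a, b, c, h⟩
  have E : ∀ x y z : Bool, F x y z Wstate =
      a 0 x * (b 0 y * c 0 z) + a 1 x * (b 1 y * c 1 z) := by
    intro x y z
    rw [h]
    simp [Fin.sum_univ_two]
  have e1 := E true false false
  have e2 := E false true false
  have e3 := E false false true
  have e4 := E false false false
  have e5 := E true true false
  have e6 := E true false true
  have e7 := E false true true
  have e8 := E true true true
  simp only [Wstate, map_add, F_tmul, q_apply] at e1 e2 e3 e4 e5 e6 e7 e8
  norm_num at e1 e2 e3 e4 e5 e6 e7 e8
  -- determinant of the first slice  [[0,1],[1,0]] :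
  have hD1 : (a 0 false) * (a 1 false) * ((b 0 false)*(c 0 false)*(b 1 true)*(c 1 true) + (b 0 true)*(c 0 true)*(b 1 false)*(c 1 false) - (b 0 false)*(c 0 true)*(b 1 true)*(c 1 false) - (b 0 true)*(c 0 false)*(b 1 false)*(c 1 true)) = -1 := by
    linear_combination (-((a 0 false)*(b 0 false)*(c 0 false) + (a 1 false)*(b 1 false)*(c 1 false))) * e7 + ((a 0 false)*(b 0 false)*(c 0 true) + (a 1 false)*(b 1 false)*(c 1 true)) * e2 + e3
  -- determinant of the second slice [[1,0],[0,0]] :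
  have hD2 : (a 0 true) * (a 1 true) * ((b 0 false)*(c 0 false)*(b 1 true)*(c 1 true) + (b 0 true)*(c 0 true)*(b 1 false)*(c 1 false) - (b 0 false)*(c 0 true)*(b 1 true)*(c 1 false) - (b 0 true)*(c 0 false)*(b 1 false)*(c 1 true)) = 0 := by
    linear_combination (-((a 0 true)*(b 0 false)*(c 0 false) + (a 1 true)*(b 1 false)*(c 1 false))) * e8 + ((a 0 true)*(b 0 false)*(c 0 true) + (a 1 true)*(b 1 false)*(c 1 true)) * e5
  -- polarized determinant of the two slices :
  have hD3 : ((a 0 false) * (a 1 true) + (a 1 false) * (a 0 true)) * ((b 0 false)*(c 0 false)*(b 1 true)*(c 1 true) + (b 0 true)*(c 0 true)*(b 1 false)*(c 1 false) - (b 0 false)*(c 0 true)*(b 1 true)*(c 1 false) - (b 0 true)*(c 0 false)*(b 1 false)*(c 1 true)) = 0 := by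
    linear_combination (-((a 0 false)*(b 0 false)*(c 0 false) + (a 1 false)*(b 1 false)*(c 1 false))) * e8 + (-((a 0 true)*(b 0 false)*(c 0 false) + (a 1 true)*(b 1 false)*(c 1 false))) * e7 + ((a 0 false)*(b 0 false)*(c 0 true) + (a 1 false)*(b 1 false)*(c 1 true)) * e5 + ((a 0 true)*(b 0 false)*(c 0 true) + (a 1 true)*(b 1 false)*(c 1 true)) * e2 + e6
  have hAA : (a 0 true) * (a 1 true) = 0 := by
    linear_combination (a 0 true) * (a 1 true) * hD1 - (a 0 false) * (a 1 false) * hD2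
  have hS : (a 0 false) * (a 1 true) + (a 1 false) * (a 0 true) = 0 := by
    linear_combination ((a 0 false) * (a 1 true) + (a 1 false) * (a 0 true)) * hD1 - (a 0 false) * (a 1 false) * hD3
  rcases mul_eq_zero.mp hAA with hA | hA
  · have hA3 : (a 1 true) = 0 := by
      linear_combination (a 1 true) * hD1 - (a 1 false) * ((b 0 false)*(c 0 false)*(b 1 true)*(c 1 true) + (b 0 true)*(c 0 true)*(b 1 false)*(c 1 false) - (b 0 false)*(c 0 true)*(b 1 true)*(c 1 false) - (b 0 true)*(c 0 false)*(b 1 false)*(c 1 true)) * hS + (a 1 false)^2 * ((b 0 false)*(c 0 false)*(b 1 true)*(c 1 true) + (b 0 true)*(c 0 true)*(b 1 false)*(c 1 false) - (b 0 false)*(c 0 true)*(b 1 true)*(c 1 false) - (b 0 true)*(c 0 false)*(b 1 false)*(c 1 true)) * hA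
    have : (1:ℂ) = 0 := by
      linear_combination e1 + (b 0 false) * (c 0 false) * hA + (b 1 false) * (c 1 false) * hA3
    exact one_ne_zero this
  · have hA1 : (a 0 true) = 0 := by
      linear_combination (a 0 true) * hD1 - (a 0 false) * ((b 0 false)*(c 0 false)*(b 1 true)*(c 1 true) + (b 0 true)*(c 0 true)*(b 1 false)*(c 1 false) - (b 0 false)*(c 0 true)*(b 1 true)*(c 1 false) - (b 0 true)*(c 0 false)*(b 1 false)*(c 1 true)) * hS + (a 0 false)^2 * ((b 0 false)*(c 0 false)*(b 1 true)*(c 1 true) + (b 0 true)*(c 0 true)*(b 1 false)*(c 1 false) - (b 0 false)*(c 0 true)*(b 1 true)*(c 1 false) - (b 0 true)*(c 0 false)*(b 1 false)*(c 1 true)) * hA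
    have : (1:ℂ) = 0 := by
      linear_combination e1 + (b 0 false) * (c 0 false) * hA1 + (b 1 false) * (c 1 false) * hA
    exact one_ne_zero this

lemma pad {r : ℕ} (hr : r ≤ 2) (a b c : Fin r → Q) :
    ∃ a' b' c' : Fin 2 → Q,
      ∑ i : Fin r, a i ⊗ₜ[ℂ] (b i ⊗ₜ[ℂ] c i) =
        ∑ i : Fin 2, a' i ⊗ₜ[ℂ] (b' i ⊗ₜ[ℂ] c' i) := by
  interval_cases r
  · exact ⟨0, 0, 0, by simp⟩
  · exact ⟨![a 0, 0], ![b 0, 0], ![c 0, 0], by simp [Fin.sum_univ_two]⟩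
  · exact ⟨a, b, c, rfl⟩

theorem rank_W_eq_three :
    (∃ (a b c : Fin 3 → Q), Wstate = ∑ i, a i ⊗ₜ[ℂ] (b i ⊗ₜ[ℂ] c i)) ∧
    ¬ (∃ (a b c : Fin 2 → Q), Wstate = ∑ i, a i ⊗ₜ[ℂ] (b i ⊗ₜ[ℂ] c i)) ∧
    tRank Wstate = 3 := by
  refine ⟨exists_rank_three, no_rank_two, ?_⟩
  have h3 : 3 ∈ {r | ∃ (a : Fin r → Q) (b : Fin r → Q) (c : Fin r → Q),
      Wstate = ∑ i, a i ⊗ₜ[ℂ] (b i ⊗ₜ[ℂ] c i)} := exists_rank_three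
  refine le_antisymm (Nat.sInf_le h3) (le_csInf ⟨3, h3⟩ ?_)
  rintro m ⟨a, b, c, hw⟩
  by_contra hm
  push_neg at hm
  have hm2 : m ≤ 2 := by omega
  obtain ⟨a', b', c', hp⟩ := pad hm2 a b c
  exact no_rank_two ⟨a', b', c', hw.trans hp⟩
end

section
/- The tensor rank of |W⟩^{⊗2}, viewed as a tripartite vector in (ℂ²⊗ℂ²)⊗(ℂ²⊗ℂ²)⊗(ℂ²⊗ℂ²) ≅ ℂ⁴⊗ℂ⁴⊗ℂ⁴ (with the copies regrouped by party), is at most 7. -/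
open TensorProduct

/-- ℂ⁴ with standard basis `e 0, e 1, e 2, e 3`. -/
abbrev Q4 : Type := Fin 4 → ℂ

noncomputable def e (i : Fin 4) : Q4 := Pi.single i 1

/-- Party-`p` index (in `Fin 4`, via `|i⟩=|i₀i₁⟩`, `|0⟩=|00⟩,|1⟩=|01⟩,|2⟩=|10⟩,|3⟩=|11⟩`)
of the summand of `W ⊗ W` in which copy 1 gives its excitation to party `f 0`
and copy 2 to party `f 1`. -/
def idx (p : Fin 3) (f : Fin 2 → Fin 3) : Fin 4 :=
  2 * (if f 0 = p then 1 else 0) + (if f 1 = p then 1 else 0)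

/-- `W ⊗ W`, regrouped party-wise as an element of `ℂ⁴ ⊗ ℂ⁴ ⊗ ℂ⁴`. -/
noncomputable def W2 : Q4 ⊗[ℂ] (Q4 ⊗[ℂ] Q4) :=
  ∑ f : Fin 2 → Fin 3, e (idx 0 f) ⊗ₜ[ℂ] (e (idx 1 f) ⊗ₜ[ℂ] e (idx 2 f))


noncomputable def J (q : Fin 3) (p : Fin 3 × Fin 3) : Fin 4 :=
  2 * (if p.1 = q then 1 else 0) + (if p.2 = q then 1 else 0)

lemma W2_eq : W2 =
    e 3 ⊗ₜ[ℂ] (e 0 ⊗ₜ[ℂ] e 0) + e 2 ⊗ₜ[ℂ] (e 1 ⊗ₜ[ℂ] e 0) + e 2 ⊗ₜ[ℂ] (e 0 ⊗ₜ[ℂ] e 1)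
  + e 1 ⊗ₜ[ℂ] (e 2 ⊗ₜ[ℂ] e 0) + e 0 ⊗ₜ[ℂ] (e 3 ⊗ₜ[ℂ] e 0) + e 0 ⊗ₜ[ℂ] (e 2 ⊗ₜ[ℂ] e 1)
  + e 1 ⊗ₜ[ℂ] (e 0 ⊗ₜ[ℂ] e 2) + e 0 ⊗ₜ[ℂ] (e 1 ⊗ₜ[ℂ] e 2) + e 0 ⊗ₜ[ℂ] (e 0 ⊗ₜ[ℂ] e 3) := by
  rw [W2]
  rw [Fintype.sum_equiv (piFinTwoEquiv fun _ => Fin 3)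
      (fun f => e (idx 0 f) ⊗ₜ[ℂ] (e (idx 1 f) ⊗ₜ[ℂ] e (idx 2 f)))
      (fun p => e (J 0 p) ⊗ₜ[ℂ] (e (J 1 p) ⊗ₜ[ℂ] e (J 2 p))) (fun f => rfl)]
  rw [Fintype.sum_prod_type]
  simp only [Fin.sum_univ_three]
  norm_num [J]
  abel

noncomputable def aV : Fin 7 → Q4 :=
  ![e 0,
    e 0 + (1/2 : ℂ) • e 1 + (1/2 : ℂ) • e 2 + (1/2 : ℂ) • e 3,
    e 0 - (1/2 : ℂ) • e 1 - (1/2 : ℂ) • e 2 + (1/2 : ℂ) • e 3,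
    e 0 + e 1 + e 2 + (2 : ℂ) • e 3,
    (1/2 : ℂ) • e 3,
    (1/2 : ℂ) • e 1 - (1/2 : ℂ) • e 2,
    e 0 + (1/2 : ℂ) • e 1 - (1/2 : ℂ) • e 2]

noncomputable def cV : Fin 7 → Q4 :=
  ![(-2 : ℂ) • e 0 + (1/2 : ℂ) • e 1 - (3/2 : ℂ) • e 2 + e 3,
    e 0 + e 1 + e 2,
    e 0 - (1/3 : ℂ) • e 1 - (1/3 : ℂ) • e 2,
    -((1/6 : ℂ) • e 1) - (1/6 : ℂ) • e 2,
    (-2 : ℂ) • e 0 + (2 : ℂ) • e 1 + (2 : ℂ) • e 2,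
    (-2 : ℂ) • e 0 + e 1 - e 2,
    -(e 1) + e 2]

theorem rank_W2_le_seven : tRank W2 ≤ 7 := by
  apply Nat.sInf_le
  refine ⟨aV, aV, cV, ?_⟩
  rw [W2_eq]
  simp only [aV, cV, Fin.sum_univ_succ, Fin.sum_univ_zero, Matrix.cons_val_zero,
    Matrix.cons_val_succ, add_zero]
  simp only [tmul_add, add_tmul, tmul_sub, sub_tmul, tmul_smul, ← smul_tmul', tmul_neg, neg_tmul,
    smul_smul]
  module
end

section
/- The tensor rank of |W⟩^{⊗2} in ℂ⁴⊗ℂ⁴⊗ℂ⁴ (copies regrouped by party) is at least 7; combined with the upper bound, rk(|W⟩^{⊗2}) = 7. -/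
open TensorProduct

/-- coordinate evaluation functional -/
noncomputable def Fc (x y z : Fin 4) : Q4 ⊗[ℂ] (Q4 ⊗[ℂ] Q4) →ₗ[ℂ] ℂ :=
  TensorProduct.lift ((LinearMap.proj x : Q4 →ₗ[ℂ] ℂ).smulRight
    (TensorProduct.lift ((LinearMap.proj y : Q4 →ₗ[ℂ] ℂ).smulRight
      (LinearMap.proj z : Q4 →ₗ[ℂ] ℂ))))

lemma Fc_tmul (x y z : Fin 4) (u v w : Q4) :
    Fc x y z (u ⊗ₜ[ℂ] (v ⊗ₜ[ℂ] w)) = u x * (v y * w z) := by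
  simp [Fc, smul_eq_mul]

def Tnat (x y z : Fin 4) : ℕ :=
  (Finset.univ.filter
    (fun f : Fin 2 → Fin 3 => x = idx 0 f ∧ y = idx 1 f ∧ z = idx 2 f)).card

noncomputable def Tc (x y z : Fin 4) : ℂ :=
  ∑ f : Fin 2 → Fin 3, e (idx 0 f) x * (e (idx 1 f) y * e (idx 2 f) z)

lemma Tc_val (x y z : Fin 4) : Tc x y z = (Tnat x y z : ℕ) := by
  rw [Tc, Tnat]
  rw [← Finset.sum_boole]
  refine Finset.sum_congr rfl fun f _ => ?_
  simp only [e, Pi.single_apply, ite_and, mul_ite, mul_one, mul_zero, ite_mul, zero_mul, one_mul]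
  by_cases h1 : x = idx 0 f <;> by_cases h2 : y = idx 1 f <;> by_cases h3 : z = idx 2 f <;>
    simp [h1, h2, h3]

lemma Fc_W2 (x y z : Fin 4) : Fc x y z W2 = Tc x y z := by
  rw [W2, map_sum, Tc]
  exact Finset.sum_congr rfl fun f _ => Fc_tmul _ _ _ _ _ _

lemma transfer {r : ℕ} (a b c : Fin r → Q4)
    (h : W2 = ∑ i, a i ⊗ₜ[ℂ] (b i ⊗ₜ[ℂ] c i)) (x y z : Fin 4) :
    ∑ i, a i x * (b i y * c i z) = Tc x y z := by
  have h2 := congrArg (Fc x y z) h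
  rw [Fc_W2, map_sum] at h2
  rw [h2]
  exact (Finset.sum_congr rfl fun i _ => (Fc_tmul _ _ _ _ _ _)).symm

example : Tnat 3 0 0 = 1 := by decide
example : Tc 3 0 0 = 1 := by rw [Tc_val, (by decide : Tnat 3 0 0 = 1)]; norm_num


/-- substitution step -/
lemma step {r : ℕ} (b c : Fin r → Q4) (s : Finset (Fin r)) (A : Fin r → Fin 4 → ℂ)
    (R : Fin 4 → Fin 4 → Fin 4 → ℂ)
    (HS : ∀ x y z, ∑ i ∈ s, A i x * (b i y * c i z) = R x y z)
    (x0 y0 z0 : Fin 4) (hR : R x0 y0 z0 ≠ 0) :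
    ∃ i0 ∈ s, ∃ lam : Fin 4 → ℂ, ∀ x y z,
      ∑ i ∈ s.erase i0, (A i x + lam x * A i x0) * (b i y * c i z)
        = R x y z + lam x * R x0 y z := by
  have h0 : ∑ i ∈ s, A i x0 * (b i y0 * c i z0) ≠ 0 := by rw [HS]; exact hR
  obtain ⟨i0, hi0, hne⟩ := Finset.exists_ne_zero_of_sum_ne_zero h0
  have hA : A i0 x0 ≠ 0 := fun h => hne (by rw [h, zero_mul])
  refine ⟨i0, hi0, fun x => -(A i0 x / A i0 x0), fun x y z => ?_⟩
  have hz : (A i0 x + -(A i0 x / A i0 x0) * A i0 x0) * (b i0 y * c i0 z) = 0 := by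
    field_simp
    ring
  rw [Finset.sum_erase s hz]
  have : ∀ i, (A i x + -(A i x0 / A i0 x0 * 0) ) = A i x := by intro i; ring
  calc ∑ i ∈ s, (A i x + -(A i0 x / A i0 x0) * A i x0) * (b i y * c i z)
      = ∑ i ∈ s, (A i x * (b i y * c i z)
          + -(A i0 x / A i0 x0) * (A i x0 * (b i y * c i z))) := by
        refine Finset.sum_congr rfl fun i _ => by ring
    _ = R x y z + -(A i0 x / A i0 x0) * R x0 y z := by
        rw [Finset.sum_add_distrib, ← Finset.mul_sum, HS, HS]

/-- common kernel vector of ≤ 3 functionals -/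
lemma kern {r : ℕ} (s : Finset (Fin r)) (hs : s.card ≤ 3) (v : Fin r → Q4) :
    ∃ x : Q4, x ≠ 0 ∧ ∀ i ∈ s, ∑ z, v i z * x z = 0 := by
  set L : Q4 →ₗ[ℂ] (↥s → ℂ) :=
    LinearMap.pi (fun i : ↥s => ∑ z : Fin 4, v i.1 z • (LinearMap.proj z : Q4 →ₗ[ℂ] ℂ))
    with hL
  have hnoinj : ¬ Function.Injective L := by
    intro hinj
    have h1 := LinearMap.finrank_le_finrank_of_injective hinj
    rw [Module.finrank_pi, Module.finrank_pi] at h1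
    simp [Fintype.card_coe, Fintype.card_fin] at h1
    omega
  rw [injective_iff_map_eq_zero'] at hnoinj
  push_neg at hnoinj
  obtain ⟨x, hx⟩ := hnoinj
  rcases hx with ⟨h0, hne⟩ | ⟨hne, h0⟩
  · refine ⟨x, hne, fun i hi => ?_⟩
    have h2 := congrFun h0 ⟨i, hi⟩
    simpa [hL, smul_eq_mul] using h2
  · exact absurd (h0 ▸ map_zero L) hne

lemma lb {r : ℕ} (a b c : Fin r → Q4)
    (H : ∀ x y z, ∑ i : Fin r, a i x * (b i y * c i z) = Tc x y z) : 7 ≤ r := by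
  by_contra hr
  push_neg at hr
  have tv0 : ∀ x y z, Tnat x y z = 0 → Tc x y z = 0 := fun x y z h => by
    rw [Tc_val, h, Nat.cast_zero]
  have tv1 : ∀ x y z, Tnat x y z = 1 → Tc x y z = 1 := fun x y z h => by
    rw [Tc_val, h, Nat.cast_one]
  have t000 : Tc 0 0 0 = 0 := tv0 0 0 0 (by decide)
  have t001 : Tc 0 0 1 = 0 := tv0 0 0 1 (by decide)
  have t002 : Tc 0 0 2 = 0 := tv0 0 0 2 (by decide)
  have t003 : Tc 0 0 3 = 1 := tv1 0 0 3 (by decide)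
  have t010 : Tc 0 1 0 = 0 := tv0 0 1 0 (by decide)
  have t011 : Tc 0 1 1 = 0 := tv0 0 1 1 (by decide)
  have t012 : Tc 0 1 2 = 1 := tv1 0 1 2 (by decide)
  have t013 : Tc 0 1 3 = 0 := tv0 0 1 3 (by decide)
  have t020 : Tc 0 2 0 = 0 := tv0 0 2 0 (by decide)
  have t021 : Tc 0 2 1 = 1 := tv1 0 2 1 (by decide)
  have t022 : Tc 0 2 2 = 0 := tv0 0 2 2 (by decide)
  have t023 : Tc 0 2 3 = 0 := tv0 0 2 3 (by decide)
  have t030 : Tc 0 3 0 = 1 := tv1 0 3 0 (by decide)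
  have t031 : Tc 0 3 1 = 0 := tv0 0 3 1 (by decide)
  have t032 : Tc 0 3 2 = 0 := tv0 0 3 2 (by decide)
  have t033 : Tc 0 3 3 = 0 := tv0 0 3 3 (by decide)
  have t100 : Tc 1 0 0 = 0 := tv0 1 0 0 (by decide)
  have t101 : Tc 1 0 1 = 0 := tv0 1 0 1 (by decide)
  have t102 : Tc 1 0 2 = 1 := tv1 1 0 2 (by decide)
  have t103 : Tc 1 0 3 = 0 := tv0 1 0 3 (by decide)
  have t110 : Tc 1 1 0 = 0 := tv0 1 1 0 (by decide)
  have t111 : Tc 1 1 1 = 0 := tv0 1 1 1 (by decide)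
  have t112 : Tc 1 1 2 = 0 := tv0 1 1 2 (by decide)
  have t113 : Tc 1 1 3 = 0 := tv0 1 1 3 (by decide)
  have t120 : Tc 1 2 0 = 1 := tv1 1 2 0 (by decide)
  have t121 : Tc 1 2 1 = 0 := tv0 1 2 1 (by decide)
  have t122 : Tc 1 2 2 = 0 := tv0 1 2 2 (by decide)
  have t123 : Tc 1 2 3 = 0 := tv0 1 2 3 (by decide)
  have t130 : Tc 1 3 0 = 0 := tv0 1 3 0 (by decide)
  have t131 : Tc 1 3 1 = 0 := tv0 1 3 1 (by decide)
  have t132 : Tc 1 3 2 = 0 := tv0 1 3 2 (by decide)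
  have t133 : Tc 1 3 3 = 0 := tv0 1 3 3 (by decide)
  have t200 : Tc 2 0 0 = 0 := tv0 2 0 0 (by decide)
  have t201 : Tc 2 0 1 = 1 := tv1 2 0 1 (by decide)
  have t202 : Tc 2 0 2 = 0 := tv0 2 0 2 (by decide)
  have t203 : Tc 2 0 3 = 0 := tv0 2 0 3 (by decide)
  have t210 : Tc 2 1 0 = 1 := tv1 2 1 0 (by decide)
  have t211 : Tc 2 1 1 = 0 := tv0 2 1 1 (by decide)
  have t212 : Tc 2 1 2 = 0 := tv0 2 1 2 (by decide)
  have t213 : Tc 2 1 3 = 0 := tv0 2 1 3 (by decide)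
  have t220 : Tc 2 2 0 = 0 := tv0 2 2 0 (by decide)
  have t221 : Tc 2 2 1 = 0 := tv0 2 2 1 (by decide)
  have t222 : Tc 2 2 2 = 0 := tv0 2 2 2 (by decide)
  have t223 : Tc 2 2 3 = 0 := tv0 2 2 3 (by decide)
  have t230 : Tc 2 3 0 = 0 := tv0 2 3 0 (by decide)
  have t231 : Tc 2 3 1 = 0 := tv0 2 3 1 (by decide)
  have t232 : Tc 2 3 2 = 0 := tv0 2 3 2 (by decide)
  have t233 : Tc 2 3 3 = 0 := tv0 2 3 3 (by decide)
  have t300 : Tc 3 0 0 = 1 := tv1 3 0 0 (by decide)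
  have t301 : Tc 3 0 1 = 0 := tv0 3 0 1 (by decide)
  have t302 : Tc 3 0 2 = 0 := tv0 3 0 2 (by decide)
  have t303 : Tc 3 0 3 = 0 := tv0 3 0 3 (by decide)
  have t310 : Tc 3 1 0 = 0 := tv0 3 1 0 (by decide)
  have t311 : Tc 3 1 1 = 0 := tv0 3 1 1 (by decide)
  have t312 : Tc 3 1 2 = 0 := tv0 3 1 2 (by decide)
  have t313 : Tc 3 1 3 = 0 := tv0 3 1 3 (by decide)
  have t320 : Tc 3 2 0 = 0 := tv0 3 2 0 (by decide)
  have t321 : Tc 3 2 1 = 0 := tv0 3 2 1 (by decide)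
  have t322 : Tc 3 2 2 = 0 := tv0 3 2 2 (by decide)
  have t323 : Tc 3 2 3 = 0 := tv0 3 2 3 (by decide)
  have t330 : Tc 3 3 0 = 0 := tv0 3 3 0 (by decide)
  have t331 : Tc 3 3 1 = 0 := tv0 3 3 1 (by decide)
  have t332 : Tc 3 3 2 = 0 := tv0 3 3 2 (by decide)
  have t333 : Tc 3 3 3 = 0 := tv0 3 3 3 (by decide)
  have H0 : ∀ x y z, ∑ i ∈ Finset.univ, a i x * (b i y * c i z) = Tc x y z := fun x y z => H x y z
  obtain ⟨i1, hi1, lam1, H1⟩ := step b c Finset.univ a Tc H0 3 0 0 (by rw [t300]; norm_num)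
  obtain ⟨i2, hi2, lam2, H2⟩ := step b c (Finset.univ.erase i1)
    (fun i x => a i x + lam1 x * a i 3)
    (fun x y z => Tc x y z + lam1 x * Tc 3 y z) H1 2 0 1
    (by simp only [t201, t301]; norm_num)
  obtain ⟨i3, hi3, lam3, H3⟩ := step b c ((Finset.univ.erase i1).erase i2)
    (fun i x => (a i x + lam1 x * a i 3) + lam2 x * (a i 2 + lam1 2 * a i 3))
    (fun x y z => (Tc x y z + lam1 x * Tc 3 y z) + lam2 x * (Tc 2 y z + lam1 2 * Tc 3 y z))
    H2 1 2 0 (by simp only [t120, t320, t220]; norm_num)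
  set s3 := (((Finset.univ : Finset (Fin r)).erase i1).erase i2).erase i3 with hs3
  have hc : s3.card ≤ 3 := by
    rw [hs3, Finset.card_erase_of_mem hi3, Finset.card_erase_of_mem hi2,
      Finset.card_erase_of_mem hi1, Finset.card_univ, Fintype.card_fin]
    omega
  obtain ⟨xv, hxv, hker⟩ := kern s3 hc c
  have hE : ∀ y : Fin 4, ∑ z : Fin 4, (((Tc 0 y z + lam1 0 * Tc 3 y z) + lam2 0 * (Tc 2 y z + lam1 2 * Tc 3 y z)) + lam3 0 * ((Tc 1 y z + lam1 1 * Tc 3 y z) + lam2 1 * (Tc 2 y z + lam1 2 * Tc 3 y z))) * xv z = 0 := by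
    intro y
    have swap : ∑ z : Fin 4,
        (∑ i ∈ s3, (((a i 0 + lam1 0 * a i 3) + lam2 0 * (a i 2 + lam1 2 * a i 3)) + lam3 0 * ((a i 1 + lam1 1 * a i 3) + lam2 1 * (a i 2 + lam1 2 * a i 3))) * (b i y * c i z)) * xv z = 0 := by
      simp_rw [Finset.sum_mul]
      rw [Finset.sum_comm]
      refine Finset.sum_eq_zero fun i hi => ?_
      have hfac : ∑ z : Fin 4, (((a i 0 + lam1 0 * a i 3) + lam2 0 * (a i 2 + lam1 2 * a i 3)) + lam3 0 * ((a i 1 + lam1 1 * a i 3) + lam2 1 * (a i 2 + lam1 2 * a i 3))) * (b i y * c i z) * xv z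
          = ((((a i 0 + lam1 0 * a i 3) + lam2 0 * (a i 2 + lam1 2 * a i 3)) + lam3 0 * ((a i 1 + lam1 1 * a i 3) + lam2 1 * (a i 2 + lam1 2 * a i 3))) * b i y) * ∑ z : Fin 4, c i z * xv z := by
        rw [Finset.mul_sum]
        exact Finset.sum_congr rfl fun z _ => by ring
      rw [hfac, hker i hi, mul_zero]
    refine Eq.trans ?_ swap
    exact Finset.sum_congr rfl fun z _ => by rw [← H3 0 y z]
  have hx0 : xv 0 = 0 := by
    have h := hE 3
    rw [Fin.sum_univ_four] at h
    simp only [t000, t001, t002, t003, t010, t011, t012, t013, t020, t021, t022, t023, t030, t031, t032, t033, t100, t101, t102, t103, t110, t111, t112, t113, t120, t121, t122, t123, t130, t131, t132, t133, t200, t201, t202, t203, t210, t211, t212, t213, t220, t221, t222, t223, t230, t231, t232, t233, t300, t301, t302, t303, t310, t311, t312, t313, t320, t321, t322, t323, t330, t331, t332, t333] at h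
    linear_combination h
  have hx1 : xv 1 = 0 := by
    have h := hE 2
    rw [Fin.sum_univ_four] at h
    simp only [t000, t001, t002, t003, t010, t011, t012, t013, t020, t021, t022, t023, t030, t031, t032, t033, t100, t101, t102, t103, t110, t111, t112, t113, t120, t121, t122, t123, t130, t131, t132, t133, t200, t201, t202, t203, t210, t211, t212, t213, t220, t221, t222, t223, t230, t231, t232, t233, t300, t301, t302, t303, t310, t311, t312, t313, t320, t321, t322, t323, t330, t331, t332, t333, hx0] at h
    linear_combination h
  have hx2 : xv 2 = 0 := by
    have h := hE 1
    rw [Fin.sum_univ_four] at h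
    simp only [t000, t001, t002, t003, t010, t011, t012, t013, t020, t021, t022, t023, t030, t031, t032, t033, t100, t101, t102, t103, t110, t111, t112, t113, t120, t121, t122, t123, t130, t131, t132, t133, t200, t201, t202, t203, t210, t211, t212, t213, t220, t221, t222, t223, t230, t231, t232, t233, t300, t301, t302, t303, t310, t311, t312, t313, t320, t321, t322, t323, t330, t331, t332, t333, hx0, hx1] at h
    linear_combination h
  have hx3 : xv 3 = 0 := by
    have h := hE 0
    rw [Fin.sum_univ_four] at h
    simp only [t000, t001, t002, t003, t010, t011, t012, t013, t020, t021, t022, t023, t030, t031, t032, t033, t100, t101, t102, t103, t110, t111, t112, t113, t120, t121, t122, t123, t130, t131, t132, t133, t200, t201, t202, t203, t210, t211, t212, t213, t220, t221, t222, t223, t230, t231, t232, t233, t300, t301, t302, t303, t310, t311, t312, t313, t320, t321, t322, t323, t330, t331, t332, t333, hx0, hx1, hx2] at h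
    linear_combination h
  exact hxv (funext fun z => by fin_cases z <;> assumption)

noncomputable def vv : Fin 7 → Q4 :=
  ![e 0 + e 3, e 0 - e 3, e 3, e 0 + e 1 + e 2, e 0 + e 1 - e 2, e 0 - e 1 + e 2, e 0 - e 1 - e 2]
noncomputable def cf : Fin 7 → ℂ := ![1/2, -1/2, -1, 1/4, -1/4, -1/4, 1/4]

set_option maxHeartbeats 4000000 in
lemma ub : W2 = ∑ i : Fin 7, (cf i • vv i) ⊗ₜ[ℂ] (vv i ⊗ₜ[ℂ] vv i) := by
  have hW2 : W2 = ∑ p : Fin 3 × Fin 3,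
      e (idx 0 ![p.1, p.2]) ⊗ₜ[ℂ] (e (idx 1 ![p.1, p.2]) ⊗ₜ[ℂ] e (idx 2 ![p.1, p.2])) := by
    rw [W2]
    refine Fintype.sum_equiv (piFinTwoEquiv fun _ => Fin 3) _ _ fun f => ?_
    have hf : ∀ p : Fin 3, idx p ![f 0, f 1] = idx p f := fun p => by
      simp [idx, Matrix.cons_val_zero, Matrix.cons_val_one, Matrix.head_cons]
      by_cases h : f 0 = p <;> simp [h]
    simp [piFinTwoEquiv, hf]
  rw [hW2, Fintype.sum_prod_type]
  simp only [Fin.sum_univ_three, Fin.sum_univ_seven,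
    show idx 0 ![(0:Fin 3), 0] = 3 from by decide,
    show idx 1 ![(0:Fin 3), 0] = 0 from by decide,
    show idx 2 ![(0:Fin 3), 0] = 0 from by decide,
    show idx 0 ![(0:Fin 3), 1] = 2 from by decide,
    show idx 1 ![(0:Fin 3), 1] = 1 from by decide,
    show idx 2 ![(0:Fin 3), 1] = 0 from by decide,
    show idx 0 ![(0:Fin 3), 2] = 2 from by decide,
    show idx 1 ![(0:Fin 3), 2] = 0 from by decide,
    show idx 2 ![(0:Fin 3), 2] = 1 from by decide,
    show idx 0 ![(1:Fin 3), 0] = 1 from by decide,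
    show idx 1 ![(1:Fin 3), 0] = 2 from by decide,
    show idx 2 ![(1:Fin 3), 0] = 0 from by decide,
    show idx 0 ![(1:Fin 3), 1] = 0 from by decide,
    show idx 1 ![(1:Fin 3), 1] = 3 from by decide,
    show idx 2 ![(1:Fin 3), 1] = 0 from by decide,
    show idx 0 ![(1:Fin 3), 2] = 0 from by decide,
    show idx 1 ![(1:Fin 3), 2] = 2 from by decide,
    show idx 2 ![(1:Fin 3), 2] = 1 from by decide,
    show idx 0 ![(2:Fin 3), 0] = 1 from by decide,
    show idx 1 ![(2:Fin 3), 0] = 0 from by decide,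
    show idx 2 ![(2:Fin 3), 0] = 2 from by decide,
    show idx 0 ![(2:Fin 3), 1] = 0 from by decide,
    show idx 1 ![(2:Fin 3), 1] = 1 from by decide,
    show idx 2 ![(2:Fin 3), 1] = 2 from by decide,
    show idx 0 ![(2:Fin 3), 2] = 0 from by decide,
    show idx 1 ![(2:Fin 3), 2] = 0 from by decide,
    show idx 2 ![(2:Fin 3), 2] = 3 from by decide]
  have hv0 : vv 0 = e 0 + e 3 := rfl
  have hv1 : vv 1 = e 0 - e 3 := rfl
  have hv2 : vv 2 = e 3 := rfl
  have hv3 : vv 3 = e 0 + e 1 + e 2 := rfl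
  have hv4 : vv 4 = e 0 + e 1 - e 2 := rfl
  have hv5 : vv 5 = e 0 - e 1 + e 2 := rfl
  have hv6 : vv 6 = e 0 - e 1 - e 2 := rfl
  have hc0 : cf 0 = (1:ℂ)/2 := rfl
  have hc1 : cf 1 = -(1:ℂ)/2 := rfl
  have hc2 : cf 2 = -(1:ℂ) := rfl
  have hc3 : cf 3 = (1:ℂ)/4 := rfl
  have hc4 : cf 4 = -(1:ℂ)/4 := rfl
  have hc5 : cf 5 = -(1:ℂ)/4 := rfl
  have hc6 : cf 6 = (1:ℂ)/4 := rfl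
  rw [hv0, hv1, hv2, hv3, hv4, hv5, hv6, hc0, hc1, hc2, hc3, hc4, hc5, hc6]
  simp only [smul_add, smul_sub, add_tmul, sub_tmul, tmul_add, tmul_sub, ← smul_tmul', tmul_smul, neg_smul, one_smul, neg_tmul, tmul_neg, smul_neg]
  module

theorem rank_W2_ge_seven_and_eq_seven : 7 ≤ tRank W2 ∧ tRank W2 = 7 := by
  have h7 : 7 ∈ {r : ℕ | ∃ (a : Fin r → Q4) (b : Fin r → Q4) (c : Fin r → Q4),
      W2 = ∑ i, a i ⊗ₜ[ℂ] (b i ⊗ₜ[ℂ] c i)} :=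
    ⟨fun i => cf i • vv i, vv, vv, ub⟩
  have hlow : ∀ m ∈ {r : ℕ | ∃ (a : Fin r → Q4) (b : Fin r → Q4) (c : Fin r → Q4),
      W2 = ∑ i, a i ⊗ₜ[ℂ] (b i ⊗ₜ[ℂ] c i)}, 7 ≤ m := by
    rintro m ⟨a, b, c, h⟩
    exact lb a b c (transfer a b c h)
  have hle : tRank W2 ≤ 7 := Nat.sInf_le h7
  have hge : 7 ≤ tRank W2 := hlow _ (Nat.sInf_mem ⟨7, h7⟩)
  exact ⟨hge, le_antisymm hle hge⟩
end

section
/- For a vector ψ ∈ H_A⊗H_B⊗H_C, the tensor rank of ψ equals the minimum number of product vectors in H_B⊗H_C whose linear span contains the image of the linear map H_A* → H_B⊗H_C induced by ψ (equivalently, the support of the reduced density operator Tr_A|ψ⟩⟨ψ|). -/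
open TensorProduct

/-- Every element of a triple tensor product is a finite sum of pure tensors. -/
lemma exists_rep {A B C : Type*} [AddCommGroup A] [Module ℂ A]
    [AddCommGroup B] [Module ℂ B] [AddCommGroup C] [Module ℂ C]
    (ψ : A ⊗[ℂ] (B ⊗[ℂ] C)) :
    ∃ (r : ℕ) (a : Fin r → A) (b : Fin r → B) (c : Fin r → C),
      ψ = ∑ i, a i ⊗ₜ[ℂ] (b i ⊗ₜ[ℂ] c i) := by
  have hadd : ∀ (x y : A ⊗[ℂ] (B ⊗[ℂ] C)),
      (∃ (r : ℕ) (a : Fin r → A) (b : Fin r → B) (c : Fin r → C),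
        x = ∑ i, a i ⊗ₜ[ℂ] (b i ⊗ₜ[ℂ] c i)) →
      (∃ (r : ℕ) (a : Fin r → A) (b : Fin r → B) (c : Fin r → C),
        y = ∑ i, a i ⊗ₜ[ℂ] (b i ⊗ₜ[ℂ] c i)) →
      (∃ (r : ℕ) (a : Fin r → A) (b : Fin r → B) (c : Fin r → C),
        x + y = ∑ i, a i ⊗ₜ[ℂ] (b i ⊗ₜ[ℂ] c i)) := by
    rintro x y ⟨r, a1, b1, c1, rfl⟩ ⟨s, a2, b2, c2, rfl⟩
    refine ⟨r + s, Fin.append a1 a2, Fin.append b1 b2, Fin.append c1 c2, ?_⟩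
    rw [Fin.sum_univ_add]
    simp [Fin.append_left, Fin.append_right]
  induction ψ using TensorProduct.induction_on with
  | zero => exact ⟨0, ![], ![], ![], by simp⟩
  | tmul a t =>
    induction t using TensorProduct.induction_on with
    | zero => exact ⟨0, ![], ![], ![], by simp⟩
    | tmul b c => exact ⟨1, ![a], ![b], ![c], by simp⟩
    | add u v hu hv =>
      have := hadd (a ⊗ₜ u) (a ⊗ₜ v) hu hv
      rwa [← TensorProduct.tmul_add] at this
  | add x y hx hy => exact hadd x y hx hy

lemma basis_rep {A B C : Type*} [AddCommGroup A] [Module ℂ A]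
    [AddCommGroup B] [Module ℂ B] [AddCommGroup C] [Module ℂ C]
    {ι : Type*} [Fintype ι] (e : Module.Basis ι ℂ A) (ψ : A ⊗[ℂ] (B ⊗[ℂ] C)) :
    ψ = ∑ j, e j ⊗ₜ[ℂ]
      ((TensorProduct.lid ℂ (B ⊗[ℂ] C))
        ((TensorProduct.map (e.coord j) LinearMap.id) ψ)) := by
  induction ψ using TensorProduct.induction_on with
  | zero => simp
  | tmul a t =>
    simp only [TensorProduct.map_tmul, LinearMap.id_coe, id_eq, TensorProduct.lid_tmul]
    conv_lhs => rw [← e.sum_repr a]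
    rw [TensorProduct.sum_tmul]
    simp [Module.Basis.coord_apply, TensorProduct.smul_tmul]
  | add x y hx hy =>
    simp only [map_add, TensorProduct.tmul_add]
    rw [Finset.sum_add_distrib, ← hx, ← hy]

theorem tRank_eq_min_product_spanning
    {A B C : Type*}
    [AddCommGroup A] [Module ℂ A] [FiniteDimensional ℂ A]
    [AddCommGroup B] [Module ℂ B] [FiniteDimensional ℂ B]
    [AddCommGroup C] [Module ℂ C] [FiniteDimensional ℂ C]
    (ψ : A ⊗[ℂ] (B ⊗[ℂ] C)) :
    tRank ψ = sInf {m | ∃ p : Fin m → B ⊗[ℂ] C,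
      (∀ i, ∃ (b : B) (c : C), p i = b ⊗ₜ[ℂ] c) ∧
      Set.range (fun f : Module.Dual ℂ A =>
          (TensorProduct.lid ℂ (B ⊗[ℂ] C)) ((TensorProduct.map f LinearMap.id) ψ))
        ⊆ (Submodule.span ℂ (Set.range p) : Submodule ℂ (B ⊗[ℂ] C))} := by
  set S1 : Set ℕ := {r | ∃ (a : Fin r → A) (b : Fin r → B) (c : Fin r → C),
    ψ = ∑ i, a i ⊗ₜ[ℂ] (b i ⊗ₜ[ℂ] c i)} with hS1
  set S2 : Set ℕ := {m | ∃ p : Fin m → B ⊗[ℂ] C,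
      (∀ i, ∃ (b : B) (c : C), p i = b ⊗ₜ[ℂ] c) ∧
      Set.range (fun f : Module.Dual ℂ A =>
          (TensorProduct.lid ℂ (B ⊗[ℂ] C)) ((TensorProduct.map f LinearMap.id) ψ))
        ⊆ (Submodule.span ℂ (Set.range p) : Submodule ℂ (B ⊗[ℂ] C))} with hS2
  -- S1 ⊆ S2
  have hsub : S1 ⊆ S2 := by
    rintro r ⟨a, b, c, hψ⟩
    refine ⟨fun i => b i ⊗ₜ[ℂ] c i, fun i => ⟨b i, c i, rfl⟩, ?_⟩
    rintro x ⟨f, rfl⟩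
    simp only [hψ, map_sum, TensorProduct.map_tmul, LinearMap.id_coe, id_eq,
      TensorProduct.lid_tmul]
    exact Submodule.sum_mem _ fun i _ =>
      Submodule.smul_mem _ _ (Submodule.subset_span ⟨i, rfl⟩)
  have hS1ne : S1.Nonempty := by
    obtain ⟨r, a, b, c, h⟩ := exists_rep ψ
    exact ⟨r, a, b, c, h⟩
  have htR : tRank ψ = sInf S1 := rfl
  -- tRank ψ ≤ m for every m ∈ S2
  have hle : ∀ m ∈ S2, tRank ψ ≤ m := by
    rintro m ⟨p, hprod, hspan⟩
    choose b c hbc using hprod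
    set e := Module.finBasis ℂ A with he
    have key := basis_rep e ψ
    have hmem : ∀ j, (TensorProduct.lid ℂ (B ⊗[ℂ] C))
        ((TensorProduct.map (e.coord j) LinearMap.id) ψ)
        ∈ Submodule.span ℂ (Set.range p) := fun j => hspan ⟨e.coord j, rfl⟩
    have hco : ∀ j, ∃ co : Fin m → ℂ,
        ∑ i, co i • p i = (TensorProduct.lid ℂ (B ⊗[ℂ] C))
          ((TensorProduct.map (e.coord j) LinearMap.id) ψ) := fun j =>
      (Finsupp.mem_span_range_iff_exists_finsupp.mp (hmem j)).elim
        (fun l hl => ⟨l, by simpa [Finsupp.sum_fintype] using hl⟩)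
    choose co hco using hco
    rw [htR]
    refine Nat.sInf_le ⟨fun i => ∑ j, co j i • e j, b, c, ?_⟩
    calc ψ = ∑ j, e j ⊗ₜ[ℂ] ((TensorProduct.lid ℂ (B ⊗[ℂ] C))
          ((TensorProduct.map (e.coord j) LinearMap.id) ψ)) := key
      _ = ∑ j, e j ⊗ₜ[ℂ] (∑ i, co j i • p i) := by
          simp_rw [hco]
      _ = ∑ j, ∑ i, (co j i • e j) ⊗ₜ[ℂ] p i := by
          simp_rw [TensorProduct.tmul_sum, TensorProduct.smul_tmul]
      _ = ∑ i, ∑ j, (co j i • e j) ⊗ₜ[ℂ] p i := Finset.sum_comm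
      _ = ∑ i, (∑ j, co j i • e j) ⊗ₜ[ℂ] (b i ⊗ₜ[ℂ] c i) := by
          simp_rw [TensorProduct.sum_tmul, hbc]
  have hS2ne : S2.Nonempty := hS1ne.mono hsub
  refine le_antisymm (hle _ (Nat.sInf_mem hS2ne)) ?_
  rw [htR]
  exact Nat.sInf_le (hsub (Nat.sInf_mem hS1ne))
end

section
/- For any complex coefficients α₀,...,α_{2ⁿ−2}, the vector (|01⟩+|10⟩)^{⊗n} + Σ_{i=0}^{2ⁿ−2} α_i φ_i has Schmidt rank (matrix rank of the associated bipartite coefficient matrix) exactly 2ⁿ, where {φ_i : 0 ≤ i ≤ 2ⁿ−1} is an enumeration of the set {|00⟩, |01⟩+|10⟩}^{⊗n} with φ_{2ⁿ−1} = (|01⟩+|10⟩)^{⊗n}. -/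
open TensorProduct

/-- Schmidt rank of a bipartite vector: minimal number of product vectors
summing to it (equal to the rank of the coefficient matrix in finite dimension). -/
noncomputable def sRank {B C : Type*} [AddCommGroup B] [Module ℂ B]
    [AddCommGroup C] [Module ℂ C] (ψ : B ⊗[ℂ] C) : ℕ :=
  sInf {r | ∃ (b : Fin r → B) (c : Fin r → C), ψ = ∑ i, b i ⊗ₜ[ℂ] c i}

/-- `(ℂ²)^{⊗n}`, as functions on `n`-bit strings. -/
abbrev V (n : ℕ) : Type := (Fin n → Bool) → ℂ

noncomputable def qb {n : ℕ} (s : Fin n → Bool) : V n := Pi.single s 1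

/-- `φ S = ⊗ₖ (if S k then |01⟩+|10⟩ else |00⟩)`, regrouped with party B
holding the first qubit of each factor and party C the second. -/
noncomputable def phi (n : ℕ) (S : Fin n → Bool) : V n ⊗[ℂ] V n :=
  ∑ g : Fin n → Bool,
    if ∀ k, S k = false → g k = false then
      qb (fun k => S k && g k) ⊗ₜ[ℂ] qb (fun k => S k && !g k)
    else 0

noncomputable def toMat (n : ℕ) :
    V n ⊗[ℂ] V n →ₗ[ℂ] Matrix (Fin n → Bool) (Fin n → Bool) ℂ :=
  TensorProduct.lift (LinearMap.mk₂ ℂ (fun v w => Matrix.vecMulVec v w)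
    (fun v v' w => by ext a b; simp [Matrix.vecMulVec_apply, add_mul])
    (fun c v w => by ext a b; simp [Matrix.vecMulVec_apply, mul_assoc])
    (fun v w w' => by ext a b; simp [Matrix.vecMulVec_apply, mul_add])
    (fun c v w => by ext a b; simp [Matrix.vecMulVec_apply]; ring))

@[simp] lemma toMat_tmul {n : ℕ} (v w : V n) :
    toMat n (v ⊗ₜ[ℂ] w) = Matrix.vecMulVec v w := rfl

lemma qb_apply {n : ℕ} (s a : Fin n → Bool) : qb s a = if a = s then 1 else 0 := by
  simp [qb, Pi.single_apply]


lemma toMat_phi {n : ℕ} (S a b : Fin n → Bool) :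
    toMat n (phi n S) a b =
      if (∀ k, (a k && b k) = false) ∧ (fun k => a k || b k) = S then 1 else 0 := by
  classical
  rw [phi, map_sum, Matrix.sum_apply]
  have hterm : ∀ g : Fin n → Bool,
      (toMat n (if ∀ k, S k = false → g k = false then
        qb (fun k => S k && g k) ⊗ₜ[ℂ] qb (fun k => S k && !g k) else 0)) a b =
      if (∀ k, S k = false → g k = false) ∧ a = (fun k => S k && g k) ∧
          b = (fun k => S k && !g k) then 1 else 0 := by
    intro g
    split_ifs with h1 h2 h3
    · rw [toMat_tmul, Matrix.vecMulVec_apply, qb_apply, qb_apply,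
        if_pos h2.2.1, if_pos h2.2.2, mul_one]
    · rw [toMat_tmul, Matrix.vecMulVec_apply, qb_apply, qb_apply]
      rcases not_and_or.1 (fun hh => h2 ⟨h1, hh⟩) with h | h
      · rw [if_neg h, zero_mul]
      · rw [if_neg h, mul_zero]
    · exact absurd h3.1 h1
    · simp
  rw [Finset.sum_congr rfl (fun g _ => hterm g)]
  by_cases hT : (∀ k, (a k && b k) = false) ∧ (fun k => a k || b k) = S
  · rw [if_pos hT]
    rw [Finset.sum_eq_single a]
    · have hle : ∀ k, S k = false → a k = false := by
        intro k hk
        have h := congrFun hT.2 k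
        rw [hk] at h
        exact (Bool.or_eq_false_iff.mp h).1
      have h2 : a = fun k => S k && a k := by
        funext k
        cases hak : a k
        · simp
        · have hSk : S k = true := by
            have hu := congrFun hT.2 k; rw [← hu, hak]; simp
          simp [hSk]
      have h3 : b = fun k => S k && !a k := by
        funext k
        have hu := congrFun hT.2 k
        have hd := hT.1 k
        cases hak : a k
        · rw [hak] at hu; simp at hu
          simp [hak, ← hu]
        · rw [hak] at hd; simp at hd
          have hSk : S k = true := by rw [← hu, hak]; simp
          simp [hak, hSk, hd]
      rw [if_pos ⟨hle, h2, h3⟩]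
    · intro g _ hg
      rw [if_neg]
      rintro ⟨hc1, hc2, -⟩
      apply hg
      funext k
      cases hgk : g k
      · have h := congrFun hc2 k
        simp [h, hgk]
      · have hSk : S k = true := by
          by_contra hs
          simp only [Bool.not_eq_true] at hs
          rw [hc1 k hs] at hgk; exact Bool.false_ne_true hgk
        have h := congrFun hc2 k
        simp [h, hgk, hSk]
    · intro h; exact absurd (Finset.mem_univ a) h
  · rw [if_neg hT]
    apply Finset.sum_eq_zero
    intro g _
    rw [if_neg]
    rintro ⟨hc1, hc2, hc3⟩
    apply hT
    constructor
    · intro k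
      rw [congrFun hc2 k, congrFun hc3 k]
      cases S k <;> cases g k <;> rfl
    · funext k
      rw [congrFun hc2 k, congrFun hc3 k]
      cases S k <;> cases g k <;> rfl

noncomputable def Mmat (n : ℕ) (α : (Fin n → Bool) → ℂ) :
    Matrix (Fin n → Bool) (Fin n → Bool) ℂ := fun a b =>
  if (∀ k, (a k && b k) = false) then
    (if (fun k => a k || b k) = (fun _ => true) then 1 else α (fun k => a k || b k))
  else 0

lemma toMat_psi (n : ℕ) (α : (Fin n → Bool) → ℂ) :
    toMat n (phi n (fun _ => true) +
      ∑ S ∈ Finset.univ.erase (fun _ => true), α S • phi n S) = Mmat n α := by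
  classical
  ext a b
  rw [map_add, Matrix.add_apply, map_sum, Matrix.sum_apply]
  have hsum : ∀ S ∈ Finset.univ.erase (fun _ : Fin n => true),
      (toMat n (α S • phi n S)) a b =
        α S * (if (∀ k, (a k && b k) = false) ∧ (fun k => a k || b k) = S then 1 else 0) := by
    intro S _
    rw [map_smul, Matrix.smul_apply, toMat_phi, smul_eq_mul]
  rw [Finset.sum_congr rfl hsum, toMat_phi]
  by_cases hd : ∀ k, (a k && b k) = false
  · by_cases hu : (fun k => a k || b k) = (fun _ : Fin n => true)
    · rw [if_pos ⟨hd, hu⟩]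
      rw [Finset.sum_eq_zero, Mmat, if_pos hd, if_pos hu, add_zero]
      intro S hS
      rw [if_neg, mul_zero]
      rintro ⟨-, hUS⟩
      exact (Finset.mem_erase.mp hS).1 (hUS ▸ hu ▸ rfl)
    · rw [if_neg (fun h => hu h.2)]
      rw [Finset.sum_eq_single_of_mem (fun k => a k || b k)
        (Finset.mem_erase.mpr ⟨hu, Finset.mem_univ _⟩), if_pos ⟨hd, rfl⟩, mul_one,
        Mmat, if_pos hd, if_neg hu, zero_add]
      intro S _ hS
      rw [if_neg, mul_zero]
      rintro ⟨-, hUS⟩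
      exact hS hUS.symm
  · have hne : ¬((∀ k, (a k && b k) = false) ∧ (fun k => a k || b k) = (fun _ : Fin n => true)) :=
      fun h => hd h.1
    rw [if_neg hne, Finset.sum_eq_zero, Mmat, if_neg hd, add_zero]
    intro S _
    rw [if_neg (fun h => hd h.1), mul_zero]

/-- complementation equiv on bit strings -/
def complE (n : ℕ) : (Fin n → Bool) ≃ (Fin n → Bool) where
  toFun a := fun k => !a k
  invFun a := fun k => !a k
  left_inv a := by funext k; simp
  right_inv a := by funext k; simp

/-- order-compatible enumeration -/
def ordE (n : ℕ) : (Fin n → Bool) ≃ Fin (2 ^ n) :=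
  (Equiv.arrowCongr (Equiv.refl (Fin n)) finTwoEquiv.symm).trans finFunctionFinEquiv

lemma ordE_mono {n : ℕ} {a b : Fin n → Bool} (h : ∀ k, a k = true → b k = true) :
    ordE n a ≤ ordE n b := by
  rw [Fin.le_def]
  show (finFunctionFinEquiv _ : ℕ) ≤ (finFunctionFinEquiv _ : ℕ)
  rw [finFunctionFinEquiv_apply, finFunctionFinEquiv_apply]
  apply Finset.sum_le_sum
  intro k _
  apply Nat.mul_le_mul_right
  have : ∀ x : Bool, ((Equiv.arrowCongr (Equiv.refl (Fin n)) finTwoEquiv.symm) a k : ℕ) =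
    ((finTwoEquiv.symm (a k) : Fin 2) : ℕ) := fun _ => rfl
  show ((finTwoEquiv.symm (a k) : Fin 2) : ℕ) ≤ ((finTwoEquiv.symm (b k) : Fin 2) : ℕ)
  cases hak : a k
  · simp [finTwoEquiv]
  · rw [h k hak]

lemma Mmat_ne_zero {n : ℕ} {α : (Fin n → Bool) → ℂ} {a b : Fin n → Bool}
    (h : Mmat n α a b ≠ 0) : ∀ k, (a k && b k) = false := by
  by_contra hc
  exact h (by rw [Mmat, if_neg hc])

lemma Mmat_compl_diag {n : ℕ} (α : (Fin n → Bool) → ℂ) (a : Fin n → Bool) :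
    Mmat n α a (fun k => !a k) = 1 := by
  rw [Mmat, if_pos, if_pos]
  · funext k; cases a k <;> rfl
  · intro k; cases a k <;> rfl

lemma rank_Mmat (n : ℕ) (α : (Fin n → Bool) → ℂ) : (Mmat n α).rank = 2 ^ n := by
  classical
  have hsub : (Mmat n α).submatrix (Equiv.refl _) (complE n) =
      ((Mmat n α).submatrix (Equiv.refl _) (complE n)) := rfl
  set N : Matrix (Fin n → Bool) (Fin n → Bool) ℂ :=
    (Mmat n α).submatrix (Equiv.refl _) (complE n) with hN
  have hrankN : N.rank = (Mmat n α).rank := Matrix.rank_submatrix _ _ _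
  -- N is triangular after reindexing by ordE
  set NN : Matrix (Fin (2 ^ n)) (Fin (2 ^ n)) ℂ :=
    N.submatrix (ordE n).symm (ordE n).symm with hNN
  have hdetNN : NN.det = 1 := by
    rw [Matrix.det_of_upperTriangular]
    · apply Finset.prod_eq_one
      intro i _
      show N ((ordE n).symm i) ((ordE n).symm i) = 1
      exact Mmat_compl_diag α _
    · intro i j hij
      show N ((ordE n).symm i) ((ordE n).symm j) = 0
      by_contra hz
      have hd := Mmat_ne_zero hz
      have hle : ∀ k, (ordE n).symm i k = true → (ordE n).symm j k = true := by
        intro k hk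
        have h2 : ((ordE n).symm i k && !((ordE n).symm j k)) = false := hd k
        cases hjk : (ordE n).symm j k
        · rw [hk, hjk] at h2; exact absurd h2 (by simp)
        · rfl
      have := ordE_mono hle
      rw [Equiv.apply_symm_apply, Equiv.apply_symm_apply] at this
      exact absurd hij (not_lt.mpr this)
  have hdetN : N.det = 1 := by
    rw [← Matrix.det_submatrix_equiv_self (ordE n).symm N]; exact hdetNN
  have : N.rank = Fintype.card (Fin n → Bool) :=
    Matrix.rank_of_isUnit N ((Matrix.isUnit_iff_isUnit_det N).mpr (by rw [hdetN]; exact isUnit_one))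
  rw [← hrankN, this, Fintype.card_fun]
  simp

lemma matrix_rank_add_le {I J : Type*} [Fintype I] [Fintype J] [DecidableEq J]
    (A B : Matrix I J ℂ) : (A + B).rank ≤ A.rank + B.rank := by
  have hle : LinearMap.range (A + B).mulVecLin ≤
      LinearMap.range A.mulVecLin ⊔ LinearMap.range B.mulVecLin := by
    rintro x ⟨y, rfl⟩
    rw [Matrix.mulVecLin_add]
    exact Submodule.mem_sup.2 ⟨_, ⟨y, rfl⟩, _, ⟨y, rfl⟩, by simp⟩
  exact le_trans (Submodule.finrank_mono hle)
    (Submodule.finrank_add_le_finrank_add_finrank _ _)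

lemma matrix_rank_vecMulVec_le {I J : Type*} [Fintype I] [Fintype J] [DecidableEq J]
    (w : I → ℂ) (v : J → ℂ) : (Matrix.vecMulVec w v).rank ≤ 1 := by
  have hle : LinearMap.range (Matrix.vecMulVec w v).mulVecLin ≤
      Submodule.span ℂ {w} := by
    rintro x ⟨y, rfl⟩
    have : (Matrix.vecMulVec w v).mulVecLin y = (dotProduct v y) • w := by
      funext i
      simp only [Matrix.mulVecLin_apply, Matrix.mulVec, Matrix.vecMulVec_apply,
        dotProduct, Pi.smul_apply, smul_eq_mul, Finset.sum_mul]
      apply Finset.sum_congr rfl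
      intro j _
      ring
    rw [this]
    exact Submodule.smul_mem _ _ (Submodule.mem_span_singleton_self w)
  refine le_trans (Submodule.finrank_mono hle) ?_
  have h1 := finrank_span_le_card (R := ℂ) ({w} : Set (I → ℂ))
  simp only [Set.toFinset_singleton, Finset.card_singleton] at h1
  exact h1

lemma matrix_rank_sum_le {I J ι : Type*} [Fintype I] [Fintype J] [DecidableEq J]
    (s : Finset ι) (f : ι → Matrix I J ℂ) :
    (∑ i ∈ s, f i).rank ≤ ∑ i ∈ s, (f i).rank := by
  classical
  induction s using Finset.induction_on with
  | empty => simp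
  | insert _ _ hx ih =>
    rw [Finset.sum_insert hx, Finset.sum_insert hx]
    exact le_trans (matrix_rank_add_le _ _) (by gcongr)

lemma exists_repr {n : ℕ} (ψ : V n ⊗[ℂ] V n) :
    ∃ v : (Fin n → Bool) → V n, ψ = ∑ a, qb a ⊗ₜ[ℂ] v a := by
  induction ψ using TensorProduct.induction_on with
  | zero => exact ⟨0, by simp⟩
  | tmul x y =>
    refine ⟨fun a => x a • y, ?_⟩
    have hx : x = ∑ a, x a • qb a := by
      funext b
      rw [Finset.sum_apply]
      rw [Finset.sum_eq_single b]
      · simp [qb_apply]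
      · intro c _ hc; simp [qb_apply, Ne.symm hc]
      · intro h; exact absurd (Finset.mem_univ b) h
    conv_lhs => rw [hx]
    rw [sum_tmul]
    congr 1
    funext a
    rw [smul_tmul, tmul_smul]
  | add u w hu hw =>
    obtain ⟨v1, h1⟩ := hu
    obtain ⟨v2, h2⟩ := hw
    refine ⟨v1 + v2, ?_⟩
    rw [h1, h2, ← Finset.sum_add_distrib]
    congr 1
    funext a
    rw [Pi.add_apply, tmul_add]


theorem schmidt_rank_perturbed (n : ℕ) (α : (Fin n → Bool) → ℂ) :
    sRank (phi n (fun _ => true) +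
      ∑ S ∈ Finset.univ.erase (fun _ => true), α S • phi n S) = 2 ^ n := by
  classical
  set ψ : V n ⊗[ℂ] V n := phi n (fun _ => true) +
      ∑ S ∈ Finset.univ.erase (fun _ => true), α S • phi n S with hψ
  have hmem : 2 ^ n ∈ {r | ∃ (b : Fin r → V n) (c : Fin r → V n),
      ψ = ∑ i, b i ⊗ₜ[ℂ] c i} := by
    obtain ⟨v, hv⟩ := exists_repr ψ
    refine ⟨fun i => qb ((ordE n).symm i), fun i => v ((ordE n).symm i), ?_⟩
    rw [hv]
    exact (Equiv.sum_comp (ordE n).symm fun a => qb a ⊗ₜ[ℂ] v a).symm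
  have hlb : ∀ r ∈ {r | ∃ (b : Fin r → V n) (c : Fin r → V n),
      ψ = ∑ i, b i ⊗ₜ[ℂ] c i}, 2 ^ n ≤ r := by
    rintro r ⟨b, c, hr⟩
    have h1 : Mmat n α = ∑ i : Fin r, Matrix.vecMulVec (b i) (c i) := by
      rw [← toMat_psi n α, ← hψ, hr, map_sum]
      exact Finset.sum_congr rfl fun i _ => toMat_tmul _ _
    calc 2 ^ n = (Mmat n α).rank := (rank_Mmat n α).symm
      _ = (∑ i : Fin r, Matrix.vecMulVec (b i) (c i)).rank := by rw [← h1]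
      _ ≤ ∑ i : Fin r, (Matrix.vecMulVec (b i) (c i)).rank := matrix_rank_sum_le _ _
      _ ≤ ∑ _i : Fin r, 1 := Finset.sum_le_sum fun i _ => matrix_rank_vecMulVec_le _ _
      _ = r := by simp
  rw [sRank]
  exact le_antisymm (Nat.sInf_le hmem) (le_csInf ⟨_, hmem⟩ hlb)
end

section
/- Let V ⊆ H_B⊗H_C be a subspace spanned by vectors φ₀,...,φ_{N−1} (N = 2ⁿ) such that for all complex α_i the vector φ_{N−1} + Σ_{i<N−1} α_i φ_i has Schmidt rank N. Then any collection of product vectors whose span contains V has size at least 2N − 1. -/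
open TensorProduct

open Matrix in
theorem span_needs_many_products {B C : Type*}
    [AddCommGroup B] [Module ℂ B] [FiniteDimensional ℂ B]
    [AddCommGroup C] [Module ℂ C] [FiniteDimensional ℂ C]
    (n : ℕ) (φ : Fin (2 ^ n) → B ⊗[ℂ] C) (hφ : LinearIndependent ℂ φ)
    (hrank : ∀ α : Fin (2 ^ n) → ℂ,
      sRank (φ ⟨2 ^ n - 1, by have := Nat.one_le_two_pow (n := n); omega⟩ +
        ∑ i : Fin (2 ^ n), if (i : ℕ) < 2 ^ n - 1 then α i • φ i else 0) = 2 ^ n)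
    (m : ℕ) (p : Fin m → B ⊗[ℂ] C)
    (hp : ∀ i, ∃ (b : B) (c : C), p i = b ⊗ₜ[ℂ] c)
    (hspan : Submodule.span ℂ (Set.range φ) ≤ Submodule.span ℂ (Set.range p)) :
    2 * 2 ^ n - 1 ≤ m := by
  classical
  by_contra hm
  push_neg at hm
  have hN1 : 1 ≤ 2 ^ n := Nat.one_le_two_pow
  have hKle : 2 ^ n - 1 ≤ 2 ^ n := Nat.sub_le _ _
  have hKN : 2 ^ n - 1 < 2 ^ n := by omega
  have hm2 : m ≤ 2 * (2 ^ n - 1) := by omega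
  choose pb pc hbc using hp
  have hM : ∀ i, ∃ Mi : Fin m → ℂ, ∑ j, Mi j • p j = φ i := fun i =>
    (Submodule.mem_span_range_iff_exists_fun ℂ).mp (hspan (Submodule.subset_span ⟨i, rfl⟩))
  choose M hMe using hM
  -- rows of the coefficient matrix are linearly independent
  have hMli : LinearIndependent ℂ M := by
    rw [Fintype.linearIndependent_iff]
    intro c hc
    have h0 : ∑ i, c i • φ i = 0 := by
      have h1 : ∑ i, c i • φ i = ∑ j, (∑ i, c i * M i j) • p j := by
        calc ∑ i, c i • φ i = ∑ i, ∑ j, (c i * M i j) • p j := by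
              refine Finset.sum_congr rfl fun i _ => ?_
              rw [← hMe i, Finset.smul_sum]
              simp [smul_smul]
          _ = ∑ j, ∑ i, (c i * M i j) • p j := Finset.sum_comm
          _ = ∑ j, (∑ i, c i * M i j) • p j := by
              refine Finset.sum_congr rfl fun j _ => ?_
              rw [Finset.sum_smul]
      rw [h1]
      refine Finset.sum_eq_zero fun j _ => ?_
      have h2 := congrFun hc j
      simp only [Finset.sum_apply, Pi.smul_apply, smul_eq_mul, Pi.zero_apply] at h2
      rw [h2, zero_smul]
    exact fun i => Fintype.linearIndependent_iff.mp hφ c h0 i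
  -- the truncated coefficient matrix
  set A : Matrix (Fin (2 ^ n - 1)) (Fin m) ℂ :=
    Matrix.of fun i j => M (Fin.castLE hKle i) j with hA
  have hAli : LinearIndependent ℂ A :=
    hMli.comp (Fin.castLE hKle) (Fin.castLE_injective hKle)
  have hspanCols : Submodule.span ℂ (Set.range Aᵀ) = ⊤ := by
    apply Submodule.eq_top_of_finrank_eq
    change Module.finrank ℂ (Submodule.span ℂ (Set.range A.col)) = _
    rw [← Matrix.rank_eq_finrank_span_cols, hAli.rank_matrix, Module.finrank_fin_fun,
      Fintype.card_fin]
  -- find a subset of 2 ^ n - 1 columns forming a basis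
  obtain ⟨s, hs_sub, hs_span, hs_li⟩ := exists_linearIndependent ℂ (Set.range Aᵀ)
  rw [hspanCols] at hs_span
  have hsfin : s.Finite := hs_li.setFinite
  haveI := hsfin.fintype
  have bS : Module.Basis s ℂ (Fin (2 ^ n - 1) → ℂ) :=
    Module.Basis.mk hs_li (by rw [Subtype.range_coe, hs_span])
  have hcard : Fintype.card s = 2 ^ n - 1 := by
    have h1 := Module.finrank_eq_card_basis bS
    rw [Module.finrank_fin_fun] at h1
    omega
  have hpre : ∀ x : s, ∃ j, Aᵀ j = (x : Fin (2 ^ n - 1) → ℂ) := fun x => hs_sub x.2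
  choose τ hτ using hpre
  have hτinj : Function.Injective τ := fun x y hxy =>
    Subtype.ext (by rw [← hτ x, ← hτ y, hxy])
  set S : Finset (Fin m) := Finset.univ.image τ with hS
  have hScard : S.card = 2 ^ n - 1 := by
    rw [hS, Finset.card_image_of_injective _ hτinj, Finset.card_univ, hcard]
  have hsub_img : s ⊆ Aᵀ '' (↑S : Set (Fin m)) := by
    intro x hx
    refine ⟨τ ⟨x, hx⟩, ?_, hτ ⟨x, hx⟩⟩
    simp [hS]
  -- the evaluation map on the chosen columns
  set T : (Fin (2 ^ n - 1) → ℂ) →ₗ[ℂ] (↥S → ℂ) :=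
    { toFun := fun α j => ∑ i, α i * A i (j : Fin m)
      map_add' := by
        intro x y; funext j
        simp [add_mul, Finset.sum_add_distrib]
      map_smul' := by
        intro r x; funext j
        simp [Finset.mul_sum, mul_assoc] } with hT
  have hTinj : Function.Injective T := by
    refine (injective_iff_map_eq_zero T).mpr fun α hα0 => ?_
    set F : (Fin (2 ^ n - 1) → ℂ) →ₗ[ℂ] ℂ :=
      { toFun := fun x => ∑ i, α i * x i
        map_add' := by intro x y; simp [mul_add, Finset.sum_add_distrib]
        map_smul' := by intro r x; simp [Finset.mul_sum, mul_left_comm] } with hF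
    have hFvan : ∀ x ∈ Aᵀ '' (↑S : Set (Fin m)), F x = 0 := by
      rintro x ⟨j, hj, rfl⟩
      have := congrFun hα0 ⟨j, hj⟩
      simpa [hT, hF, Matrix.transpose_apply] using this
    have hFtop : ∀ x, F x = 0 := by
      intro x
      have hxmem : x ∈ Submodule.span ℂ (Aᵀ '' (↑S : Set (Fin m))) := by
        have hmono : Submodule.span ℂ s ≤ Submodule.span ℂ (Aᵀ '' (↑S : Set (Fin m))) :=
          Submodule.span_mono hsub_img
        rw [hs_span] at hmono
        exact hmono Submodule.mem_top
      have hker : Submodule.span ℂ (Aᵀ '' (↑S : Set (Fin m))) ≤ LinearMap.ker F := by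
        rw [Submodule.span_le]
        intro y hy
        exact LinearMap.mem_ker.mpr (hFvan y hy)
      exact LinearMap.mem_ker.mp (hker hxmem)
    funext i
    have := hFtop (Pi.single i 1)
    simpa [hF, Pi.single_apply, mul_ite, Finset.sum_ite_eq'] using this
  have hTsurj : Function.Surjective T := by
    refine (LinearMap.injective_iff_surjective_of_finrank_eq_finrank ?_).mp hTinj
    rw [Module.finrank_fin_fun, Module.finrank_pi, Fintype.card_coe, hScard]
  obtain ⟨α, hα⟩ := hTsurj (fun j => - M ⟨2 ^ n - 1, hKN⟩ (j : Fin m))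
  -- the coefficient vector of the perturbed state
  set c : Fin m → ℂ := fun j => M ⟨2 ^ n - 1, hKN⟩ j + ∑ i, α i * A i j with hc
  have hc0 : ∀ j ∈ S, c j = 0 := by
    intro j hj
    have h1 := congrFun hα ⟨j, hj⟩
    simp only [hT, LinearMap.coe_mk, AddHom.coe_mk] at h1
    rw [hc]
    simp only [h1]
    simp
  set αf : Fin (2 ^ n) → ℂ :=
    fun i => if h : (i : ℕ) < 2 ^ n - 1 then α ⟨(i : ℕ), h⟩ else 0 with hαf
  -- reindex the sum
  have hsum : (∑ i : Fin (2 ^ n), if (i : ℕ) < 2 ^ n - 1 then αf i • φ i else 0)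
      = ∑ i : Fin (2 ^ n - 1), α i • φ (Fin.castLE hKle i) := by
    rw [← Finset.sum_filter]
    refine Finset.sum_bij'
      (fun (i : Fin (2 ^ n)) (hi : i ∈ Finset.univ.filter fun i : Fin (2 ^ n) =>
        (i : ℕ) < 2 ^ n - 1) => (⟨(i : ℕ), by simpa using hi⟩ : Fin (2 ^ n - 1)))
      (fun (i : Fin (2 ^ n - 1)) (_ : i ∈ Finset.univ) => Fin.castLE hKle i) ?_ ?_ ?_ ?_ ?_
    · intro i hi
      exact Finset.mem_univ _
    · intro i hi
      simp only [Finset.mem_filter, Finset.mem_univ, true_and, Fin.coe_castLE]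
      exact i.isLt
    · intro i hi; exact Fin.ext rfl
    · intro i hi; exact Fin.ext rfl
    · intro i hi
      have hiK : (i : ℕ) < 2 ^ n - 1 := by simpa using hi
      simp only [hαf, hiK, dif_pos]
      congr 1
  have hψeq : φ (⟨2 ^ n - 1, hKN⟩ : Fin (2 ^ n))
      + (∑ i : Fin (2 ^ n), if (i : ℕ) < 2 ^ n - 1 then αf i • φ i else 0)
      = ∑ j, c j • p j := by
    rw [hsum, ← hMe ⟨2 ^ n - 1, hKN⟩]
    have h2 : ∑ i : Fin (2 ^ n - 1), α i • φ (Fin.castLE hKle i)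
        = ∑ j, (∑ i, α i * A i j) • p j := by
      calc ∑ i : Fin (2 ^ n - 1), α i • φ (Fin.castLE hKle i)
          = ∑ i : Fin (2 ^ n - 1), ∑ j, (α i * A i j) • p j := by
            refine Finset.sum_congr rfl fun i _ => ?_
            rw [← hMe (Fin.castLE hKle i), Finset.smul_sum]
            simp [smul_smul, hA]
        _ = ∑ j, ∑ i : Fin (2 ^ n - 1), (α i * A i j) • p j := Finset.sum_comm
        _ = ∑ j, (∑ i, α i * A i j) • p j := by
            refine Finset.sum_congr rfl fun j _ => ?_
            rw [Finset.sum_smul]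
    rw [h2, ← Finset.sum_add_distrib]
    refine Finset.sum_congr rfl fun j _ => ?_
    rw [hc, add_smul]
  have hψ' : φ (⟨2 ^ n - 1, hKN⟩ : Fin (2 ^ n))
      + (∑ i : Fin (2 ^ n), if (i : ℕ) < 2 ^ n - 1 then αf i • φ i else 0)
      = ∑ j ∈ Sᶜ, c j • p j := by
    rw [hψeq]
    symm
    apply Finset.sum_subset (Finset.subset_univ _)
    intro j _ hj
    have hjS : j ∈ S := by simpa using hj
    rw [hc0 j hjS, zero_smul]
  -- bound the Schmidt rank
  have hle : sRank (φ (⟨2 ^ n - 1, hKN⟩ : Fin (2 ^ n))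
      + ∑ i : Fin (2 ^ n), if (i : ℕ) < 2 ^ n - 1 then αf i • φ i else 0) ≤ (Sᶜ).card := by
    apply Nat.sInf_le
    refine ⟨fun t => c ((Sᶜ).equivFin.symm t) • pb ((Sᶜ).equivFin.symm t),
      fun t => pc ((Sᶜ).equivFin.symm t), ?_⟩
    rw [hψ']
    rw [← Finset.sum_coe_sort (Sᶜ) (fun j => c j • p j)]
    rw [← Equiv.sum_comp (Sᶜ).equivFin.symm (fun x : ↥(Sᶜ) => c (x : Fin m) • p (x : Fin m))]
    refine Finset.sum_congr rfl fun t _ => ?_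
    rw [hbc, TensorProduct.smul_tmul']
  have hr : sRank (φ (⟨2 ^ n - 1, hKN⟩ : Fin (2 ^ n))
      + ∑ i : Fin (2 ^ n), if (i : ℕ) < 2 ^ n - 1 then αf i • φ i else 0) = 2 ^ n := hrank αf
  have hcardc : (Sᶜ).card = m - (2 ^ n - 1) := by
    rw [Finset.card_compl, hScard, Fintype.card_fin]
  rw [hr, hcardc] at hle
  omega
end

section
/- The image of the contraction map induced by W^{⊗2} against party A (i.e., the support of Tr_A |W^{⊗2}⟩⟨W^{⊗2}|) is the 4-dimensional subspace of ℂ⁴⊗ℂ⁴ spanned by |00⟩, |01⟩+|10⟩, |02⟩+|20⟩, and |03⟩+|12⟩+|21⟩+|30⟩. -/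
open TensorProduct

noncomputable def ee (i j : Fin 4) : Q4 ⊗[ℂ] Q4 := e i ⊗ₜ[ℂ] e j

/-- Contraction of `W ⊗ W` against a dual vector on party A. -/
noncomputable def contrA (f : Module.Dual ℂ Q4) : Q4 ⊗[ℂ] Q4 :=
  (TensorProduct.lid ℂ (Q4 ⊗[ℂ] Q4)) ((TensorProduct.map f LinearMap.id) W2)


set_option synthInstance.maxHeartbeats 400000 in
lemma contrA_eq (f : Module.Dual ℂ Q4) :
    contrA f = f (e 0) • (ee 0 3 + ee 1 2 + ee 2 1 + ee 3 0)
      + f (e 1) • (ee 0 2 + ee 2 0) + f (e 2) • (ee 0 1 + ee 1 0) + f (e 3) • ee 0 0 := by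
  simp only [contrA, W2_eq, map_add, LinearEquiv.map_add, TensorProduct.map_tmul,
    LinearMap.id_coe, id_eq, TensorProduct.lid_tmul, ee, smul_add]
  abel

noncomputable def v : Fin 4 → Q4 ⊗[ℂ] Q4 :=
  ![ee 0 0, ee 0 1 + ee 1 0, ee 0 2 + ee 2 0, ee 0 3 + ee 1 2 + ee 2 1 + ee 3 0]

noncomputable def c (a b : Fin 4) : Q4 ⊗[ℂ] Q4 →ₗ[ℂ] ℂ :=
  (TensorProduct.lid ℂ ℂ).toLinearMap ∘ₗ
    TensorProduct.map (LinearMap.proj a) (LinearMap.proj b)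

lemma c_ee (a b i j : Fin 4) :
    c a b (ee i j) = (if a = i then 1 else 0) * (if b = j then 1 else 0) := by
  simp only [c, ee, e, LinearMap.coe_comp, LinearEquiv.coe_coe, Function.comp_apply,
    TensorProduct.map_tmul, LinearMap.proj_apply, Pi.single_apply, TensorProduct.lid_tmul,
    smul_eq_mul]

noncomputable def L : Q4 ⊗[ℂ] Q4 →ₗ[ℂ] (Fin 4 → ℂ) := LinearMap.pi (fun k => c 0 k)

lemma hLv : (fun k => L (v k)) = (Pi.basisFun ℂ (Fin 4)) := by
  funext k
  funext k'
  have : L (v k) k' = c 0 k' (v k) := rfl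
  rw [this]
  fin_cases k <;> fin_cases k' <;>
    simp [v, c_ee, Pi.basisFun_apply, Pi.single_apply]

lemma hv : LinearIndependent ℂ v := by
  apply LinearIndependent.of_comp L
  have := (Pi.basisFun ℂ (Fin 4)).linearIndependent
  rwa [show (L ∘ v) = _ from hLv]

lemma hrange : Set.range v = ({ee 0 0, ee 0 1 + ee 1 0, ee 0 2 + ee 2 0,
    ee 0 3 + ee 1 2 + ee 2 1 + ee 3 0} : Set (Q4 ⊗[ℂ] Q4)) := by
  ext x
  simp only [Set.mem_range, Set.mem_insert_iff, Set.mem_singleton_iff]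
  constructor
  · rintro ⟨k, rfl⟩
    fin_cases k <;> simp [v]
  · rintro (h | h | h | h) <;> subst h
    exacts [⟨0, by simp [v]⟩, ⟨1, by simp [v]⟩, ⟨2, by simp [v]⟩, ⟨3, by simp [v]⟩]

theorem image_contraction_W2 :
    Submodule.span ℂ (Set.range contrA) =
      Submodule.span ℂ ({ee 0 0, ee 0 1 + ee 1 0, ee 0 2 + ee 2 0,
        ee 0 3 + ee 1 2 + ee 2 1 + ee 3 0} : Set (Q4 ⊗[ℂ] Q4)) ∧
    Module.finrank ℂ (Submodule.span ℂ (Set.range contrA)) = 4 := by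
  have hspan : Submodule.span ℂ (Set.range contrA) =
      Submodule.span ℂ ({ee 0 0, ee 0 1 + ee 1 0, ee 0 2 + ee 2 0,
        ee 0 3 + ee 1 2 + ee 2 1 + ee 3 0} : Set (Q4 ⊗[ℂ] Q4)) := by
    apply le_antisymm
    · rw [Submodule.span_le]
      rintro _ ⟨f, rfl⟩
      rw [contrA_eq]
      have m0 : ee 0 0 ∈ Submodule.span ℂ ({ee 0 0, ee 0 1 + ee 1 0, ee 0 2 + ee 2 0,
          ee 0 3 + ee 1 2 + ee 2 1 + ee 3 0} : Set (Q4 ⊗[ℂ] Q4)) := Submodule.subset_span (by simp)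
      have m1 : ee 0 1 + ee 1 0 ∈ Submodule.span ℂ ({ee 0 0, ee 0 1 + ee 1 0, ee 0 2 + ee 2 0,
          ee 0 3 + ee 1 2 + ee 2 1 + ee 3 0} : Set (Q4 ⊗[ℂ] Q4)) := Submodule.subset_span (by simp)
      have m2 : ee 0 2 + ee 2 0 ∈ Submodule.span ℂ ({ee 0 0, ee 0 1 + ee 1 0, ee 0 2 + ee 2 0,
          ee 0 3 + ee 1 2 + ee 2 1 + ee 3 0} : Set (Q4 ⊗[ℂ] Q4)) := Submodule.subset_span (by simp)
      have m3 : ee 0 3 + ee 1 2 + ee 2 1 + ee 3 0 ∈ Submodule.span ℂ ({ee 0 0,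
          ee 0 1 + ee 1 0, ee 0 2 + ee 2 0,
          ee 0 3 + ee 1 2 + ee 2 1 + ee 3 0} : Set (Q4 ⊗[ℂ] Q4)) := Submodule.subset_span (by simp)
      exact Submodule.add_mem _ (Submodule.add_mem _ (Submodule.add_mem _
        (Submodule.smul_mem _ _ m3) (Submodule.smul_mem _ _ m2))
        (Submodule.smul_mem _ _ m1)) (Submodule.smul_mem _ _ m0)
    · rw [Submodule.span_le]
      intro x hx
      have key : ∀ k : Fin 4, contrA (LinearMap.proj k) ∈ Submodule.span ℂ (Set.range contrA) :=
        fun k => Submodule.subset_span ⟨_, rfl⟩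
      have h0 := key 3; have h1 := key 2; have h2 := key 1; have h3 := key 0
      rw [contrA_eq] at h0 h1 h2 h3
      simp only [LinearMap.proj_apply, e, Pi.single_apply] at h0 h1 h2 h3
      norm_num at h0 h1 h2 h3
      rcases hx with h | h | h | h <;> subst h
      exacts [h0, h1, h2, h3]
  refine ⟨hspan, ?_⟩
  rw [hspan, ← hrange, finrank_span_eq_card hv]
  simp
end
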